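/- Let m ≥ 1 and let F be a finite set of strings over the alphabet Fin m, each of length at least 2; for each j ≥ 2 let a_j be the number of elements of F of length j. Let A be the formal power series 1 − m·X + ∑_{j≥2} a_j·X^j over ℝ (a polynomial, since F is finite); A has constant coefficient 1 and hence is invertible in ℝ⟦X⟧. If every coefficient of the inverse power series A⁻¹ is strictly positive, then for every natural number N there exists a string of length N over Fin m that avoids F. -/

import Mathlib

open Finset

section Aux
variable {m : ℕ}

def Good (F : Finset (List (Fin m))) (w : List (Fin m)) : Prop := ∀ f ∈ F, ¬ f <:+: w

instance (F : Finset (List (Fin m))) : DecidablePred (Good F) :=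
  fun _ => inferInstanceAs (Decidable (∀ f ∈ F, _))

def strs (m n : ℕ) : Finset (List (Fin m)) :=
  (Finset.univ : Finset (List.Vector (Fin m) n)).map
    ⟨List.Vector.toList, List.Vector.toList_injective⟩

lemma mem_strs {n : ℕ} {w : List (Fin m)} : w ∈ strs m n ↔ w.length = n := by
  simp only [strs, Finset.mem_map, Finset.mem_univ, true_and, Function.Embedding.coeFn_mk]
  constructor
  · rintro ⟨v, rfl⟩; exact v.toList_length
  · rintro rfl; exact ⟨⟨w, rfl⟩, rfl⟩

def cnt (F : Finset (List (Fin m))) (n : ℕ) : ℕ :=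
  ((strs m n).filter (Good F)).card

lemma Good.of_prefix {F : Finset (List (Fin m))} {u p : List (Fin m)}
    (hu : Good F u) (hp : p <+: u) : Good F p :=
  fun f hf hinf => hu f hf (hinf.trans hp.isInfix)

lemma cnt_pos_iff {F : Finset (List (Fin m))} {n : ℕ} :
    0 < cnt F n ↔ ∃ w : List (Fin m), w.length = n ∧ Good F w := by
  rw [cnt, Finset.card_pos]
  constructor
  · rintro ⟨w, hw⟩
    rw [Finset.mem_filter, mem_strs] at hw
    exact ⟨w, hw.1, hw.2⟩
  · rintro ⟨w, h1, h2⟩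
    exact ⟨w, Finset.mem_filter.2 ⟨mem_strs.2 h1, h2⟩⟩

end Aux

section Key
variable {m : ℕ}

lemma key_count (F : Finset (List (Fin m))) (hF : ∀ w ∈ F, 2 ≤ w.length) (q : ℕ) :
    m * cnt F q ≤ cnt F (q+1) +
      ∑ f ∈ F.filter (fun f => f.length ≤ q+1), cnt F (q+1 - f.length) := by
  classical
  set S := (strs m q).filter (Good F) with hS
  set T := ((S ×ˢ (Finset.univ : Finset (Fin m))).image (fun p => p.1.concat p.2)) with hT
  have hinj : Function.Injective (fun p : List (Fin m) × Fin m => p.1.concat p.2) := by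
    rintro ⟨u, x⟩ ⟨v, y⟩ h
    simp only [List.concat_eq_append] at h
    obtain ⟨h1, h2⟩ := List.append_inj' h rfl
    simp_all
  have hcardT : T.card = m * cnt F q := by
    rw [hT, Finset.card_image_of_injective _ hinj, Finset.card_product, Finset.card_univ,
      Fintype.card_fin, cnt, Nat.mul_comm]
  -- membership decomposition for T
  have hmemT : ∀ w ∈ T, ∃ u x, u ∈ S ∧ w = u ++ [x] := by
    intro w hw
    rw [hT, Finset.mem_image] at hw
    obtain ⟨⟨u, x⟩, hp, rfl⟩ := hw
    rw [Finset.mem_product] at hp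
    exact ⟨u, x, hp.1, (List.concat_eq_append)⟩
  have hlenS : ∀ u ∈ S, u.length = q ∧ Good F u := by
    intro u hu; rw [hS, Finset.mem_filter, mem_strs] at hu; exact hu
  have hgood : T.filter (Good F) ⊆ (strs m (q+1)).filter (Good F) := by
    intro w hw
    rw [Finset.mem_filter] at hw ⊢
    obtain ⟨u, x, hu, rfl⟩ := hmemT w hw.1
    refine ⟨mem_strs.2 ?_, hw.2⟩
    simp [(hlenS u hu).1]
  have hbad : T.filter (fun w => ¬ Good F w) ⊆
      (F.filter (fun f => f.length ≤ q+1)).biUnion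
        (fun f => ((strs m (q+1-f.length)).filter (Good F)).image (· ++ f)) := by
    intro w hw
    rw [Finset.mem_filter] at hw
    obtain ⟨u, x, hu, rfl⟩ := hmemT w hw.1
    obtain ⟨hulen, hugood⟩ := hlenS u hu
    have hbadw := hw.2
    rw [Good] at hbadw; push_neg at hbadw
    obtain ⟨f, hf, s, t, hst⟩ := hbadw
    rcases List.eq_nil_or_concat t with rfl | ⟨t', y, rfl⟩
    · -- f is a suffix: u ++ [x] = s ++ f
      rw [List.append_nil] at hst
      have hfne : f ≠ [] := by
        intro h; have := hF f hf; simp [h] at this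
      obtain ⟨f', x', rfl⟩ := (List.eq_nil_or_concat f).resolve_left hfne
      rw [List.concat_eq_append, ← List.append_assoc] at hst
      obtain ⟨hsu, hxx⟩ := List.append_inj' hst rfl
      -- s ++ f' = u
      have hspre : s <+: u := ⟨f', hsu⟩
      have hsgood : Good F s := hugood.of_prefix hspre
      have hlen : s.length + (f'.concat x').length = q + 1 := by
        have := congrArg List.length hst
        simp at this ⊢
        omega
      rw [Finset.mem_biUnion]
      refine ⟨f'.concat x', Finset.mem_filter.2 ⟨hf, by omega⟩, ?_⟩
      rw [Finset.mem_image]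
      refine ⟨s, Finset.mem_filter.2 ⟨mem_strs.2 (by omega), hsgood⟩, ?_⟩
      rw [← hst]
      simp
    · -- f would be an infix of u, contradiction
      exfalso
      rw [List.concat_eq_append, ← List.append_assoc] at hst
      obtain ⟨hsu, _⟩ := List.append_inj' hst rfl
      exact hugood f hf ⟨s, t', hsu⟩
  calc m * cnt F q = T.card := hcardT.symm
    _ = (T.filter (Good F)).card + (T.filter (fun w => ¬ Good F w)).card :=
        (Finset.card_filter_add_card_filter_not (Good F)).symm
    _ ≤ cnt F (q+1) + ∑ f ∈ F.filter (fun f => f.length ≤ q+1), cnt F (q+1 - f.length) := by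
        refine Nat.add_le_add (Finset.card_le_card hgood) ?_
        refine le_trans (Finset.card_le_card hbad) ?_
        refine le_trans (Finset.card_biUnion_le) ?_
        exact Finset.sum_le_sum (fun f _ => Finset.card_image_le)
end Key

section Main
variable {m : ℕ}

lemma cnt_zero (F : Finset (List (Fin m))) (hF : ∀ w ∈ F, 2 ≤ w.length) : cnt F 0 = 1 := by
  have h1 : strs m 0 = {([] : List (Fin m))} := by
    ext w; rw [mem_strs, Finset.mem_singleton, List.length_eq_zero_iff]
  have h2 : Good F ([] : List (Fin m)) := by
    intro f hf hinf
    rw [List.infix_nil] at hinf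
    have := hF f hf; simp [hinf] at this
  rw [cnt, h1, Finset.filter_singleton, if_pos h2, Finset.card_singleton]

lemma bridge (F : Finset (List (Fin m))) (hF : ∀ w ∈ F, 2 ≤ w.length) (q : ℕ) :
    ∑ f ∈ F.filter (fun f => f.length ≤ q+1), ((cnt F (q+1 - f.length) : ℝ))
      = ∑ j ∈ Finset.range q,
          ((F.filter (fun w => w.length = j+2)).card : ℝ) * (cnt F (q-1-j) : ℝ) := by
  classical
  have hmaps : ∀ f ∈ F.filter (fun f => f.length ≤ q+1), f.length - 2 ∈ Finset.range q := by
    intro f hf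
    rw [Finset.mem_filter] at hf
    have := hF f hf.1
    rw [Finset.mem_range]
    omega
  rw [← Finset.sum_fiberwise_of_maps_to hmaps (fun f => ((cnt F (q+1 - f.length) : ℝ)))]
  refine Finset.sum_congr rfl (fun j hj => ?_)
  rw [Finset.mem_range] at hj
  rw [Finset.filter_filter]
  have hset : F.filter (fun f => f.length ≤ q+1 ∧ f.length - 2 = j)
      = F.filter (fun w => w.length = j+2) := by
    refine Finset.filter_congr (fun f hf => ?_)
    have := hF f hf
    constructor
    · rintro ⟨h1, h2⟩; omega
    · rintro h; omega
  rw [hset]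
  have : ∀ f ∈ F.filter (fun w => w.length = j+2),
      ((cnt F (q+1 - f.length) : ℝ)) = (cnt F (q-1-j) : ℝ) := by
    intro f hf
    rw [Finset.mem_filter] at hf
    rw [hf.2]
    congr 2
    omega
  rw [Finset.sum_congr rfl this, Finset.sum_const, nsmul_eq_mul]
end Main

/-- Golod-style criterion: let `F` be a finite set of forbidden strings over `Fin m`
(each of length ≥ 2), `a_j` the number of forbidden strings of length `j`, and
`A = 1 − m·X + ∑_{j≥2} a_j·X^j ∈ ℝ⟦X⟧`.  If every coefficient of `A⁻¹` is strictly
positive, then there exist arbitrarily long strings avoiding all forbidden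
substrings. -/
theorem exists_long_string_avoiding_of_inv_coeff_pos (m : ℕ) (hm : 1 ≤ m)
    (F : Finset (List (Fin m))) (hF : ∀ w ∈ F, 2 ≤ w.length)
    (A : PowerSeries ℝ)
    (hA : A = PowerSeries.mk (fun j => if j = 0 then 1 else if j = 1 then -(m : ℝ)
        else ((F.filter (fun w => w.length = j)).card : ℝ)))
    (hpos : ∀ n : ℕ, 0 < PowerSeries.coeff (R := ℝ) n A⁻¹) :
    ∀ N : ℕ, ∃ w : List (Fin m), w.length = N ∧ ∀ f ∈ F, ¬ f <:+: w := by
  classical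
  intro N
  set B : PowerSeries ℝ := PowerSeries.mk (fun n => (cnt F n : ℝ)) with hB
  have hAB : ∀ n : ℕ, PowerSeries.coeff (R := ℝ) n (A * B)
      = ∑ k ∈ Finset.range (n+1),
          (PowerSeries.coeff (R := ℝ) k A) * (cnt F (n - k) : ℝ) := by
    intro n
    rw [PowerSeries.coeff_mul, Finset.Nat.sum_antidiagonal_eq_sum_range_succ_mk]
    exact Finset.sum_congr rfl (fun k _ => by rw [hB, PowerSeries.coeff_mk])
  have hAB0 : PowerSeries.coeff (R := ℝ) 0 (A * B) = 1 := by
    rw [hAB 0]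
    simp [hA, cnt_zero F hF]
  have hABnn : ∀ n : ℕ, 0 ≤ PowerSeries.coeff (R := ℝ) n (A * B) := by
    intro n
    rcases n with _ | q
    · rw [hAB0]; norm_num
    · rw [hAB (q+1), Finset.sum_range_succ', Finset.sum_range_succ']
      have hc0 : (PowerSeries.coeff (R := ℝ) 0 A) * (cnt F (q+1-0) : ℝ) = (cnt F (q+1) : ℝ) := by
        simp [hA]
      have hc1 : (PowerSeries.coeff (R := ℝ) (0+1) A) * (cnt F (q+1-(0+1)) : ℝ)
          = -((m : ℝ) * (cnt F q : ℝ)) := by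
        simp [hA]
      rw [hc0, hc1]
      have hrest : ∀ j ∈ Finset.range q,
          (PowerSeries.coeff (R := ℝ) (j+1+1) A) * (cnt F (q+1-(j+1+1)) : ℝ)
          = ((F.filter (fun w => w.length = j+2)).card : ℝ) * (cnt F (q-1-j) : ℝ) := by
        intro j _
        have h1 : q+1-(j+1+1) = q-1-j := by omega
        rw [hA, PowerSeries.coeff_mk, h1]
        norm_num
      rw [Finset.sum_congr rfl hrest]
      have hkey := key_count F hF q
      have hkey' : (m : ℝ) * (cnt F q : ℝ) ≤ (cnt F (q+1) : ℝ)
          + ∑ f ∈ F.filter (fun f => f.length ≤ q+1), ((cnt F (q+1 - f.length) : ℝ)) := by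
        push_cast
        exact_mod_cast hkey
      rw [bridge F hF q] at hkey'
      linarith
  have hA0 : PowerSeries.constantCoeff (R := ℝ) A ≠ 0 := by
    rw [hA]
    simp
  have hu : A * A⁻¹ = 1 := PowerSeries.mul_inv_cancel A hA0
  have hBeq : B = (A * B) * A⁻¹ := by
    have : (A * B) * A⁻¹ = B * (A * A⁻¹) := by ring
    rw [this, hu, mul_one]
  have hcoeff : (cnt F N : ℝ) = PowerSeries.coeff (R := ℝ) N ((A * B) * A⁻¹) := by
    rw [← hBeq, hB, PowerSeries.coeff_mk]
  have hposN : 0 < (cnt F N : ℝ) := by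
    rw [hcoeff, PowerSeries.coeff_mul]
    refine Finset.sum_pos' (fun p hp => mul_nonneg (hABnn p.1) (hpos p.2).le) ?_
    refine ⟨(0, N), by simp, ?_⟩
    simpa [hAB0] using hpos N
  have : 0 < cnt F N := by exact_mod_cast hposN
  obtain ⟨w, hw1, hw2⟩ := cnt_pos_iff.1 this
  exact ⟨w, hw1, hw2⟩
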